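/- Let A be a unital commutative C*-algebra, E a Hilbert A-module, and (fᵢ)_{i∈ℕ} a standard normalized tight frame for E, i.e. for every x ∈ E the series Σᵢ ⟨x,fᵢ⟩⟨fᵢ,x⟩ converges in norm to ⟨x,x⟩. Let T : E → E be adjointable with adjoint T*, and suppose the series Σᵢ ⟨T*fᵢ,T*fᵢ⟩ converges in norm to some b ∈ A. Then for every n ∈ ℕ and all x₁,…,xₙ ∈ E with μₙ(x₁,…,xₙ) ≤ 1 one has Σⱼ₌₁ⁿ ⟨Txⱼ,Txⱼ⟩ ≤ b in the canonical order on self-adjoint elements of A; in particular π̃₂(T) ≤ ‖b‖^{1/2}. -/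

import Mathlib

open scoped InnerProductSpace RightActions ENNReal

noncomputable section

/-- The Hilbert C⋆-module class as it stood in Mathlib of December 2024 (right `Aᵐᵒᵖ`-action,
inner product `A`-linear on the right: `⟪x, y <• a⟫ = ⟪x, y⟫ * a`). -/
class CStarModuleRight (A : outParam <| Type*) (E : Type*) [NonUnitalSemiring A] [StarRing A] [Module ℂ A]
    [AddCommGroup E] [Module ℂ E] [PartialOrder A] [SMul Aᵐᵒᵖ E] [Norm A] [Norm E]
    extends Inner A E where
  inner_add_right {x} {y} {z} : inner x (y + z) = inner x y + inner x z
  inner_self_nonneg {x} : 0 ≤ inner x x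
  inner_self {x} : inner x x = 0 ↔ x = 0
  inner_op_smul_right {a : A} {x y : E} : inner x (y <• a) = inner x y * a
  inner_smul_right_complex {z : ℂ} {x} {y} : inner x (z • y) = z • inner x y
  star_inner x y : star (inner x y) = inner y x
  norm_eq_sqrt_norm_inner_self x : ‖x‖ = √‖inner x x‖

variable {A : Type*} [CommCStarAlgebra A] [PartialOrder A] [StarOrderedRing A]
variable {E : Type*} [NormedAddCommGroup E] [NormedSpace ℂ E] [SMul Aᵐᵒᵖ E]
  [CStarModuleRight A E] [CompleteSpace E]
variable {F : Type*} [NormedAddCommGroup F] [NormedSpace ℂ F] [SMul Aᵐᵒᵖ F]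
  [CStarModuleRight A F] [CompleteSpace F]

/-- `μₙ(x₁,…,xₙ) = sup { ‖Σᵢ ⟪xᵢ, y⟫⟪y, xᵢ⟫‖^(1/2) : y ∈ E, ‖y‖ ≤ 1 }`. -/
def mu {G : Type*} [NormedAddCommGroup G] [NormedSpace ℂ G] [SMul Aᵐᵒᵖ G]
    [CStarModuleRight A G] {n : ℕ} (x : Fin n → G) : ℝ :=
  ⨆ y : {y : G // ‖y‖ ≤ 1}, Real.sqrt ‖∑ i, ⟪x i, (y : G)⟫_A * ⟪(y : G), x i⟫_A‖

/-- `π̃₂(T) = sup { ‖Σᵢ ⟪Txᵢ, Txᵢ⟫‖^(1/2) : n ∈ ℕ, μₙ(x₁,…,xₙ) ≤ 1 }` as an element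
of `[0,∞]`. -/
def piTwo {G H : Type*} [NormedAddCommGroup G] [NormedSpace ℂ G] [SMul Aᵐᵒᵖ G]
    [CStarModuleRight A G] [NormedAddCommGroup H] [NormedSpace ℂ H] [SMul Aᵐᵒᵖ H]
    [CStarModuleRight A H] (T : G → H) : ℝ≥0∞ :=
  ⨆ (n : ℕ) (x : Fin n → G) (_ : mu x ≤ 1),
    ENNReal.ofReal (Real.sqrt ‖∑ i, ⟪T (x i), T (x i)⟫_A‖)

section Bridge

variable {A : Type*} [CommCStarAlgebra A] [PartialOrder A]
variable {E : Type*} [AddCommGroup E] [Module ℂ E] [SMul Aᵐᵒᵖ E] [Norm E] [CStarModuleRight A E]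

lemma CStarModuleRight.inner_op_smul_left {a : A} {x y : E} :
    inner A (x <• a) y = star a * inner A x y := by
  rw [← CStarModuleRight.star_inner y, CStarModuleRight.inner_op_smul_right, star_mul,
    CStarModuleRight.star_inner]

lemma CStarModuleRight.inner_smul_left_complex {z : ℂ} {x y : E} :
    inner A (z • x) y = star z • inner A x y := by
  rw [← CStarModuleRight.star_inner y, CStarModuleRight.inner_smul_right_complex, star_smul,
    CStarModuleRight.star_inner]

lemma CStarModuleRight.norm_sq_eq {x : E} : ‖x‖ ^ 2 = ‖inner A x x‖ := by
  rw [CStarModuleRight.norm_eq_sqrt_norm_inner_self (A := A), Real.sq_sqrt (norm_nonneg _)]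

lemma CStarModuleRight.inner_zero_right {x : E} : inner A x (0 : E) = 0 := by
  have h := CStarModuleRight.inner_add_right (A := A) (x := x) (y := (0 : E)) (z := 0)
  rw [add_zero] at h
  exact (left_eq_add.mp h)

lemma CStarModuleRight.inner_zero_left {x : E} : inner A (0 : E) x = 0 := by
  rw [← CStarModuleRight.star_inner x, CStarModuleRight.inner_zero_right, star_zero]

def CStarModuleRight.toSMulA : SMul A E := ⟨fun a x => x <• a⟩

attribute [local instance] CStarModuleRight.toSMulA

def CStarModuleRight.toCStarModule : CStarModule A E where
  toInner := CStarModuleRight.toInner (A := A)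
  inner_add_right := CStarModuleRight.inner_add_right
  inner_self_nonneg := CStarModuleRight.inner_self_nonneg
  inner_self := CStarModuleRight.inner_self
  inner_op_smul_right := by
    intro a x y
    change inner A x (y <• a) = _
    rw [CStarModuleRight.inner_op_smul_right, mul_comm]
  inner_smul_right_complex := CStarModuleRight.inner_smul_right_complex
  star_inner := CStarModuleRight.star_inner
  norm_eq_sqrt_norm_inner_self := CStarModuleRight.norm_eq_sqrt_norm_inner_self

attribute [local instance] CStarModuleRight.toCStarModule

lemma CStarModuleRight.norm_inner_le [StarOrderedRing A] (E) [AddCommGroup E] [Module ℂ E]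
    [SMul Aᵐᵒᵖ E] [Norm E] [CStarModuleRight A E] {x y : E} :
    ‖inner A x y‖ ≤ ‖x‖ * ‖y‖ :=
  CStarModule.norm_inner_le (A := A) E

end Bridge

section AuxKey

open scoped ComplexOrder
open WeakDual

variable {A' : Type*} [CommCStarAlgebra A'] [PartialOrder A'] [StarOrderedRing A']

private lemma char_nonneg' (φ : characterSpace ℂ A') {a : A'} (ha : 0 ≤ a) : 0 ≤ φ a :=
  spectrum_nonneg_of_nonneg ha (AlgHom.apply_mem_spectrum (φ : A' →ₐ[ℂ] ℂ) a)

private lemma key_le {S C : A'} (hS : 0 ≤ S) (hC : 0 ≤ C)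
    (h : ∀ a : A', ‖S * (a * star a)‖ ≤ ‖C * (a * star a)‖) : S ≤ C := by
  have main : ∀ φ : characterSpace ℂ A', (φ S).re ≤ (φ C).re := by
    intro φ
    refine le_of_forall_pos_le_add fun ε hε => ?_
    have hcont : Continuous fun ψ : characterSpace ℂ A' => (ψ C).re :=
      Complex.continuous_re.comp (map_continuous (gelfandTransform ℂ A' C))
    set U : Set (characterSpace ℂ A') := {ψ | (ψ C).re < (φ C).re + ε} with hU
    have hUopen : IsOpen U := isOpen_lt hcont continuous_const
    have hφU : φ ∈ U := by simpa [hU] using hε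
    obtain ⟨g, hg0, hg1, hg01⟩ := exists_continuous_zero_one_of_isClosed
      hUopen.isClosed_compl isClosed_singleton
      (Set.disjoint_singleton_right.mpr (by simpa using hφU))
    set q : C(characterSpace ℂ A', ℂ) :=
      ⟨fun ψ => (g ψ : ℂ), Complex.continuous_ofReal.comp (map_continuous g)⟩ with hqdef
    obtain ⟨a, ha⟩ : ∃ a : A', gelfandTransform ℂ A' a = q :=
      ⟨gelfandStarTransform A' |>.symm q, (gelfandStarTransform A').apply_symm_apply q⟩
    have hnorm : ∀ x : A', ‖gelfandTransform ℂ A' x‖ = ‖x‖ := fun x =>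
      (gelfandTransform_isometry A').norm_map_of_map_zero (map_zero _) x
    have hmulS : gelfandTransform ℂ A' (S * (a * star a)) =
        gelfandTransform ℂ A' S * (q * star q) := by
      rw [map_mul, map_mul, gelfandTransform_map_star, ha]
    have hmulC : gelfandTransform ℂ A' (C * (a * star a)) =
        gelfandTransform ℂ A' C * (q * star q) := by
      rw [map_mul, map_mul, gelfandTransform_map_star, ha]
    have hgφ : g φ = 1 := hg1 rfl
    have hSim : (φ S).im = 0 := ((Complex.le_def.mp (char_nonneg' φ hS)).2).symm
    have hlow : (φ S).re ≤ ‖S * (a * star a)‖ := by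
      have h1 : (gelfandTransform ℂ A' S * (q * star q)) φ = φ S := by
        simp [hqdef, hgφ]
      calc (φ S).re ≤ ‖φ S‖ := Complex.re_le_norm _
        _ = ‖(gelfandTransform ℂ A' (S * (a * star a))) φ‖ := by
            rw [hmulS, h1]
        _ ≤ ‖gelfandTransform ℂ A' (S * (a * star a))‖ :=
            ContinuousMap.norm_coe_le_norm _ _
        _ = ‖S * (a * star a)‖ := hnorm _
    have hCre : 0 ≤ (φ C).re := (Complex.le_def.mp (char_nonneg' φ hC)).1
    have hup : ‖C * (a * star a)‖ ≤ (φ C).re + ε := by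
      rw [← hnorm, hmulC]
      rw [ContinuousMap.norm_le _ (by positivity)]
      intro ψ
      have him : (ψ C).im = 0 := ((Complex.le_def.mp (char_nonneg' ψ hC)).2).symm
      have hre : 0 ≤ (ψ C).re := (Complex.le_def.mp (char_nonneg' ψ hC)).1
      have hψCeq : (ψ C) = ((ψ C).re : ℂ) := Complex.ext rfl (by simp [him])
      have happ : (gelfandTransform ℂ A' C * (q * star q)) ψ
          = (((ψ C).re * (g ψ * g ψ) : ℝ) : ℂ) := by
        simp only [hqdef, ContinuousMap.mul_apply, ContinuousMap.coe_mk,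
          ContinuousMap.star_apply, Complex.star_def, Complex.conj_ofReal,
          ← Complex.ofReal_mul]
        rw [show (gelfandTransform ℂ A' C) ψ = ψ C from rfl, hψCeq]
        push_cast
        simp only [Complex.ofReal_re]
      rw [happ, Complex.norm_real, Real.norm_eq_abs, abs_of_nonneg
        (by have := (hg01 ψ).1; positivity)]
      by_cases hψ : ψ ∈ U
      · have h1 : (ψ C).re < (φ C).re + ε := hψ
        have h2 : g ψ * g ψ ≤ 1 := by
          have := (hg01 ψ).1; have := (hg01 ψ).2
          nlinarith
        nlinarith
      · have : g ψ = 0 := hg0 hψ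
        simp [this]
        positivity
    linarith [h a, hlow.trans ((h a).trans hup)]
  rw [← sub_nonneg]
  have hd : IsSelfAdjoint (C - S) := (IsSelfAdjoint.of_nonneg hC).sub (.of_nonneg hS)
  rw [nonneg_iff_isSelfAdjoint_and_quasispectrumRestricts, quasispectrumRestricts_iff_spectrumRestricts]
  refine ⟨hd, ?_⟩
  rw [SpectrumRestricts.nnreal_iff]
  intro x hx
  rw [← hd.coe_mem_spectrum_complex] at hx
  obtain ⟨φ, hφ⟩ := WeakDual.CharacterSpace.mem_spectrum_iff_exists.mp hx
  have hxeq : (x : ℂ) = φ C - φ S := by rw [← hφ, map_sub]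
  have hxre := congrArg Complex.re hxeq
  simp only [Complex.ofReal_re, Complex.sub_re] at hxre
  have := main φ
  linarith

end AuxKey

section AuxMod

variable {A : Type*} [CommCStarAlgebra A] [PartialOrder A] [StarOrderedRing A]
variable {E : Type*} [NormedAddCommGroup E] [NormedSpace ℂ E] [SMul Aᵐᵒᵖ E]
  [CStarModuleRight A E]

private lemma mu_bddAbove {n : ℕ} (x : Fin n → E) :
    BddAbove (Set.range fun y : {y : E // ‖y‖ ≤ 1} =>
      Real.sqrt ‖∑ i, ⟪x i, (y : E)⟫_A * ⟪(y : E), x i⟫_A‖) := by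
  refine ⟨Real.sqrt (∑ j, ‖x j‖ ^ 2), ?_⟩
  rintro r ⟨y, rfl⟩
  apply Real.sqrt_le_sqrt
  calc ‖∑ i, ⟪x i, (y:E)⟫_A * ⟪(y:E), x i⟫_A‖
      ≤ ∑ i, ‖⟪x i, (y:E)⟫_A * ⟪(y:E), x i⟫_A‖ := norm_sum_le _ _
    _ ≤ ∑ i, ‖x i‖ ^ 2 := Finset.sum_le_sum fun i _ => by
        calc ‖⟪x i, (y:E)⟫_A * ⟪(y:E), x i⟫_A‖
            ≤ ‖⟪x i, (y:E)⟫_A‖ * ‖⟪(y:E), x i⟫_A‖ := norm_mul_le _ _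
          _ ≤ ‖x i‖ ^ 2 := by
              have h1 : ‖⟪x i, (y:E)⟫_A‖ ≤ ‖x i‖ * ‖(y:E)‖ := CStarModuleRight.norm_inner_le E
              have h2 : ‖⟪(y:E), x i⟫_A‖ ≤ ‖(y:E)‖ * ‖x i‖ := CStarModuleRight.norm_inner_le E
              have h3 : ‖(y:E)‖ ≤ 1 := y.2
              have h4 : (0:ℝ) ≤ ‖(y:E)‖ := norm_nonneg _
              have h5 : (0:ℝ) ≤ ‖x i‖ := norm_nonneg _
              have h7 : (0:ℝ) ≤ ‖⟪(y:E), x i⟫_A‖ := norm_nonneg _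
              calc ‖⟪x i, (y:E)⟫_A‖ * ‖⟪(y:E), x i⟫_A‖
                  ≤ (‖x i‖ * ‖(y:E)‖) * (‖(y:E)‖ * ‖x i‖) :=
                    mul_le_mul h1 h2 h7 (by positivity)
                _ = (‖(y:E)‖ * ‖(y:E)‖) * (‖x i‖ * ‖x i‖) := by ring
                _ ≤ 1 * (‖x i‖ * ‖x i‖) :=
                    mul_le_mul_of_nonneg_right (by nlinarith) (by positivity)
                _ = ‖x i‖ ^ 2 := by ring

private lemma norm_sum_inner_le {n : ℕ} (x : Fin n → E) (hx : mu x ≤ 1) (z : E) :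
    ‖∑ j, ⟪x j, z⟫_A * ⟪z, x j⟫_A‖ ≤ ‖z‖ ^ 2 := by
  rcases eq_or_ne z 0 with rfl | hz
  · simp [CStarModuleRight.inner_zero_right, CStarModuleRight.inner_zero_left]
  have hz' : (0:ℝ) < ‖z‖ := norm_pos_iff.mpr hz
  set c : ℂ := ((‖z‖⁻¹ : ℝ) : ℂ) with hc
  set w : E := c • z with hw
  have hwn : ‖w‖ ≤ 1 := by
    rw [hw, norm_smul, hc, Complex.norm_real, Real.norm_eq_abs,
      abs_of_nonneg (inv_nonneg.mpr hz'.le), inv_mul_cancel₀ hz'.ne']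
  have hsum : ∑ j, ⟪x j, w⟫_A * ⟪w, x j⟫_A
      = (c * c) • ∑ j, ⟪x j, z⟫_A * ⟪z, x j⟫_A := by
    rw [Finset.smul_sum]
    refine Finset.sum_congr rfl fun j _ => ?_
    rw [hw, CStarModuleRight.inner_smul_right_complex, CStarModuleRight.inner_smul_left_complex,
      smul_mul_smul_comm]
    congr 1
    rw [hc, Complex.star_def, Complex.conj_ofReal]
  have hnorm2 : ‖∑ j, ⟪x j, w⟫_A * ⟪w, x j⟫_A‖
      = (‖z‖⁻¹ * ‖z‖⁻¹) * ‖∑ j, ⟪x j, z⟫_A * ⟪z, x j⟫_A‖ := by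
    rw [hsum, norm_smul, hc, ← Complex.ofReal_mul, Complex.norm_real, Real.norm_eq_abs,
      abs_of_nonneg (by positivity)]
  have hle : Real.sqrt ‖∑ j, ⟪x j, w⟫_A * ⟪w, x j⟫_A‖ ≤ 1 :=
    le_trans (le_ciSup (mu_bddAbove x) ⟨w, hwn⟩) hx
  have hle1 : ‖∑ j, ⟪x j, w⟫_A * ⟪w, x j⟫_A‖ ≤ 1 := by
    nlinarith [Real.sq_sqrt (norm_nonneg (∑ j, ⟪x j, w⟫_A * ⟪w, x j⟫_A)),
      Real.sqrt_nonneg ‖∑ j, ⟪x j, w⟫_A * ⟪w, x j⟫_A‖]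
  rw [hnorm2] at hle1
  have hfin := mul_le_mul_of_nonneg_left hle1 (le_of_lt (by positivity : (0:ℝ) < ‖z‖ * ‖z‖))
  calc ‖∑ j, ⟪x j, z⟫_A * ⟪z, x j⟫_A‖
      = (‖z‖ * ‖z‖) * ((‖z‖⁻¹ * ‖z‖⁻¹) * ‖∑ j, ⟪x j, z⟫_A * ⟪z, x j⟫_A‖) := by
        field_simp
    _ ≤ (‖z‖ * ‖z‖) * 1 := hfin
    _ = ‖z‖ ^ 2 := by ring

private lemma sum_inner_le_inner_self {n : ℕ} (x : Fin n → E) (hx : mu x ≤ 1) (y : E) :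
    ∑ j, ⟪x j, y⟫_A * ⟪y, x j⟫_A ≤ ⟪y, y⟫_A := by
  refine key_le (Finset.sum_nonneg fun j _ => ?_) CStarModuleRight.inner_self_nonneg fun a => ?_
  · rw [← CStarModuleRight.star_inner (x j)]
    exact mul_star_self_nonneg _
  · have hL : (∑ j, ⟪x j, y⟫_A * ⟪y, x j⟫_A) * (a * star a)
        = ∑ j, ⟪x j, y <• a⟫_A * ⟪y <• a, x j⟫_A := by
      rw [Finset.sum_mul]
      refine Finset.sum_congr rfl fun j _ => ?_
      rw [CStarModuleRight.inner_op_smul_right, CStarModuleRight.inner_op_smul_left]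
      ring
    have hR : ‖⟪y, y⟫_A * (a * star a)‖ = ‖y <• a‖ ^ 2 := by
      rw [CStarModuleRight.norm_sq_eq, CStarModuleRight.inner_op_smul_right,
        CStarModuleRight.inner_op_smul_left]
      congr 1
      ring
    rw [hL, hR]
    exact norm_sum_inner_le x hx (y <• a)

end AuxMod

/-- Let `A` be a unital commutative C*-algebra, `(fᵢ)_{i∈ℕ}` a standard normalized tight frame
for `E`, and `T : E → E` adjointable with adjoint `T'` such that `Σᵢ ⟪T'fᵢ, T'fᵢ⟫` converges in
norm to `b ∈ A`. Then `Σⱼ₌₁ⁿ ⟪Txⱼ, Txⱼ⟫ ≤ b` whenever `μₙ(x₁,…,xₙ) ≤ 1`; in particular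
`π̃₂(T) ≤ ‖b‖^(1/2)`. -/
theorem sum_inner_le_of_frame (f : ℕ → E)
    (hf : ∀ x : E, Filter.Tendsto
        (fun m => ∑ i ∈ Finset.range m, ⟪x, f i⟫_A * ⟪f i, x⟫_A)
        Filter.atTop (nhds ⟪x, x⟫_A))
    (T : E →L[ℂ] E) (T' : E →L[ℂ] E)
    (hT : ∀ (x y : E), ⟪T x, y⟫_A = ⟪x, T' y⟫_A)
    (b : A)
    (hb : Filter.Tendsto (fun m => ∑ i ∈ Finset.range m, ⟪T' (f i), T' (f i)⟫_A)
        Filter.atTop (nhds b)) :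
    (∀ (n : ℕ) (x : Fin n → E), mu x ≤ 1 → ∑ j, ⟪T (x j), T (x j)⟫_A ≤ b) ∧
    piTwo (⇑T) ≤ ENNReal.ofReal (Real.sqrt ‖b‖) := by
  have part1 : ∀ (n : ℕ) (x : Fin n → E), mu x ≤ 1 → ∑ j, ⟪T (x j), T (x j)⟫_A ≤ b := by
    intro n x hx
    have hPb : ∀ m, ∑ i ∈ Finset.range m, ⟪T' (f i), T' (f i)⟫_A ≤ b :=
      Monotone.ge_of_tendsto
        (fun p q hpq => Finset.sum_le_sum_of_subset_of_nonneg
          (Finset.range_subset_range.mpr hpq) fun i _ _ => CStarModuleRight.inner_self_nonneg) hb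
    have hgm : ∀ m, ∑ j, ∑ i ∈ Finset.range m, ⟪T (x j), f i⟫_A * ⟪f i, T (x j)⟫_A ≤ b := by
      intro m
      rw [Finset.sum_comm]
      calc ∑ i ∈ Finset.range m, ∑ j, ⟪T (x j), f i⟫_A * ⟪f i, T (x j)⟫_A
          = ∑ i ∈ Finset.range m, ∑ j, ⟪x j, T' (f i)⟫_A * ⟪T' (f i), x j⟫_A := by
            refine Finset.sum_congr rfl fun i _ => Finset.sum_congr rfl fun j _ => ?_
            have h1 := hT (x j) (f i)
            have h2 : ⟪f i, T (x j)⟫_A = ⟪T' (f i), x j⟫_A := by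
              rw [← CStarModuleRight.star_inner (T (x j)), h1, CStarModuleRight.star_inner]
            rw [h1, h2]
        _ ≤ ∑ i ∈ Finset.range m, ⟪T' (f i), T' (f i)⟫_A :=
            Finset.sum_le_sum fun i _ => sum_inner_le_inner_self x hx (T' (f i))
        _ ≤ b := hPb m
    have htend : Filter.Tendsto
        (fun m => ∑ j, ∑ i ∈ Finset.range m, ⟪T (x j), f i⟫_A * ⟪f i, T (x j)⟫_A)
        Filter.atTop (nhds (∑ j, ⟪T (x j), T (x j)⟫_A)) :=
      tendsto_finset_sum _ fun j _ => hf (T (x j))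
    exact le_of_tendsto htend (Filter.Eventually.of_forall hgm)
  refine ⟨part1, ?_⟩
  rw [piTwo]
  refine iSup_le fun n => iSup_le fun x => iSup_le fun hx => ?_
  refine ENNReal.ofReal_le_ofReal (Real.sqrt_le_sqrt ?_)
  exact CStarAlgebra.norm_le_norm_of_nonneg_of_le
    (Finset.sum_nonneg fun j _ => CStarModuleRight.inner_self_nonneg) (part1 n x hx)
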